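/- Let k be a real parameter with k² < 1, let k' = √(1−k²) and K = K(k). For all real numbers u, α, β, set θ = (β−α)/2, a = (u−α)/2 and b = (u−β)/2, and assume cn(a|k), cn(b|k), cn(b+K|k) and cn(b−K|k) are all nonzero. Then sn(θ|k)·(dn(a|k)/cn(a|k))·(dn(b|k)/cn(b|k)) + k'·cn(θ|k)·(1/cn(b+K|k))·(1/cn(a|k)) + (dn(b|k)/cn(b|k))·(dn(b−K|k)/cn(b−K|k)) = 0. (This identity, equivalent to the addition relation sn(u+v)·cn u − cn(u+v)·dn v·sn u − dn u·sn v = 0, is the key computation showing that the one-parameter family of functions f is in the kernel of the Kasteleyn operator of the bipartite graph G^Q associated to two independent Z-invariant Ising models.) -/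

import Mathlib

open Real Filter

/-- Complete elliptic integral of the first kind `K`, as a function of the
squared modulus `m = k²`. -/
noncomputable def ellK (m : ℝ) : ℝ :=
  ∫ τ in (0:ℝ)..(π/2), 1 / Real.sqrt (1 - m * Real.sin τ ^ 2)

/-- The incomplete elliptic integral of the first kind
`φ ↦ ∫₀^φ (1 - k² sin² t)^{-1/2} dt`, as a function of the squared modulus `m = k²`. -/
noncomputable def amF (m φ : ℝ) : ℝ :=
  ∫ t in (0:ℝ)..φ, 1 / Real.sqrt (1 - m * Real.sin t ^ 2)

/-- Jacobi's amplitude, the inverse of `amF m`, squared modulus `m = k²`. -/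
noncomputable def am (m u : ℝ) : ℝ := Function.invFun (amF m) u

/-- Jacobi elliptic function `sn`, squared modulus `m = k²`. -/
noncomputable def sn (u m : ℝ) : ℝ := Real.sin (am m u)

/-- Jacobi elliptic function `cn`, squared modulus `m = k²`. -/
noncomputable def cn (u m : ℝ) : ℝ := Real.cos (am m u)

/-- Jacobi elliptic function `dn`, squared modulus `m = k²`. -/
noncomputable def dn (u m : ℝ) : ℝ := Real.sqrt (1 - m * sn u m ^ 2)

/-- Jacobi elliptic function `sc = sn/cn`, squared modulus `m = k²`. -/
noncomputable def sc (u m : ℝ) : ℝ := sn u m / cn u m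

/-! ### Auxiliary development -/

noncomputable def jF (m t : ℝ) : ℝ := 1 / Real.sqrt (1 - m * Real.sin t ^ 2)

variable {m : ℝ}

lemma base_pos (hm0 : 0 ≤ m) (hm1 : m < 1) (t : ℝ) :
    0 < 1 - m * Real.sin t ^ 2 := by
  nlinarith [Real.sin_sq_le_one t, sq_nonneg (Real.sin t)]

lemma jF_cont (hm0 : 0 ≤ m) (hm1 : m < 1) : Continuous (jF m) := by
  apply continuous_const.div
  · exact Real.continuous_sqrt.comp (by continuity)
  · intro t
    exact (Real.sqrt_pos.mpr (base_pos hm0 hm1 t)).ne'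

lemma one_le_jF (hm0 : 0 ≤ m) (hm1 : m < 1) (t : ℝ) : 1 ≤ jF m t := by
  rw [jF, le_div_iff₀ (Real.sqrt_pos.mpr (base_pos hm0 hm1 t)), one_mul]
  have h1 : Real.sqrt (1 - m * Real.sin t ^ 2) ≤ Real.sqrt 1 :=
    Real.sqrt_le_sqrt (by nlinarith [sq_nonneg (Real.sin t)])
  simpa using h1

lemma jF_pos (hm0 : 0 ≤ m) (hm1 : m < 1) (t : ℝ) : 0 < jF m t :=
  lt_of_lt_of_le one_pos (one_le_jF hm0 hm1 t)

lemma amF_eq (φ : ℝ) : amF m φ = ∫ t in (0:ℝ)..φ, jF m t := rfl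

lemma amF_sub (hm0 : 0 ≤ m) (hm1 : m < 1) (x y : ℝ) :
    amF m y = amF m x + ∫ t in x..y, jF m t := by
  rw [amF_eq, amF_eq]
  exact (intervalIntegral.integral_add_adjacent_intervals
    ((jF_cont hm0 hm1).intervalIntegrable 0 x)
    ((jF_cont hm0 hm1).intervalIntegrable x y)).symm

lemma amF_strictMono (hm0 : 0 ≤ m) (hm1 : m < 1) : StrictMono (amF m) := by
  intro x y hxy
  have h := amF_sub hm0 hm1 x y
  have hint : y - x ≤ ∫ t in x..y, jF m t := by
    calc y - x = ∫ _t in x..y, (1:ℝ) := by simp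
    _ ≤ ∫ t in x..y, jF m t :=
      intervalIntegral.integral_mono_on hxy.le intervalIntegrable_const
        ((jF_cont hm0 hm1).intervalIntegrable x y)
        (fun t _ => one_le_jF hm0 hm1 t)
  linarith

lemma amF_zero : amF m 0 = 0 := by simp [amF]

lemma le_amF (hm0 : 0 ≤ m) (hm1 : m < 1) {φ : ℝ} (hφ : 0 ≤ φ) : φ ≤ amF m φ := by
  have h := amF_sub hm0 hm1 0 φ
  rw [amF_zero, zero_add] at h
  have hint : φ - 0 ≤ ∫ t in (0:ℝ)..φ, jF m t := by
    calc φ - 0 = ∫ _t in (0:ℝ)..φ, (1:ℝ) := by simp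
    _ ≤ _ := intervalIntegral.integral_mono_on hφ intervalIntegrable_const
        ((jF_cont hm0 hm1).intervalIntegrable 0 φ)
        (fun t _ => one_le_jF hm0 hm1 t)
  linarith

lemma amF_neg (φ : ℝ) : amF m (-φ) = -amF m φ := by
  have heven : ∀ x : ℝ, jF m (-x) = jF m x := by intro x; simp [jF]
  have h := intervalIntegral.integral_comp_neg (a := (0:ℝ)) (b := φ) (jF m)
  simp only [heven, neg_zero] at h
  rw [amF_eq, amF_eq, intervalIntegral.integral_symm, ← h]

lemma amF_le (hm0 : 0 ≤ m) (hm1 : m < 1) {φ : ℝ} (hφ : φ ≤ 0) : amF m φ ≤ φ := by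
  have h := le_amF hm0 hm1 (neg_nonneg.mpr hφ)
  rw [amF_neg] at h
  linarith

lemma amF_hasDerivAt (hm0 : 0 ≤ m) (hm1 : m < 1) (φ : ℝ) :
    HasDerivAt (amF m) (jF m φ) φ := by
  exact intervalIntegral.integral_hasDerivAt_right
    ((jF_cont hm0 hm1).intervalIntegrable 0 φ)
    ((jF_cont hm0 hm1).stronglyMeasurableAtFilter _ _)
    (jF_cont hm0 hm1).continuousAt

lemma amF_continuous (hm0 : 0 ≤ m) (hm1 : m < 1) : Continuous (amF m) := by
  have : Differentiable ℝ (amF m) := fun φ => (amF_hasDerivAt hm0 hm1 φ).differentiableAt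
  exact this.continuous

lemma amF_surjective (hm0 : 0 ≤ m) (hm1 : m < 1) : Function.Surjective (amF m) := by
  apply (amF_continuous hm0 hm1).surjective
  · apply tendsto_atTop_mono' _ _ tendsto_id
    filter_upwards [eventually_ge_atTop (0:ℝ)] with φ hφ
    exact le_amF hm0 hm1 hφ
  · apply tendsto_atBot_mono' _ _ tendsto_id
    filter_upwards [eventually_le_atBot (0:ℝ)] with φ hφ
    exact amF_le hm0 hm1 hφ

lemma am_amF (hm0 : 0 ≤ m) (hm1 : m < 1) (φ : ℝ) : am m (amF m φ) = φ :=
  Function.leftInverse_invFun (amF_strictMono hm0 hm1).injective φ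

lemma amF_am (hm0 : 0 ≤ m) (hm1 : m < 1) (u : ℝ) : amF m (am m u) = u :=
  Function.invFun_eq (amF_surjective hm0 hm1 u)

lemma am_continuous (hm0 : 0 ≤ m) (hm1 : m < 1) : Continuous (am m) := by
  have key : am m = ⇑(StrictMono.orderIsoOfSurjective (amF m) (amF_strictMono hm0 hm1)
      (amF_surjective hm0 hm1)).symm := by
    funext u
    apply (amF_strictMono hm0 hm1).injective
    rw [amF_am hm0 hm1]
    have h2 := (StrictMono.orderIsoOfSurjective (amF m) (amF_strictMono hm0 hm1)
      (amF_surjective hm0 hm1)).apply_symm_apply u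
    rw [StrictMono.coe_orderIsoOfSurjective] at h2
    exact h2.symm
  rw [key]
  exact OrderIso.continuous _

lemma am_hasDerivAt (hm0 : 0 ≤ m) (hm1 : m < 1) (u : ℝ) :
    HasDerivAt (am m) (dn u m) u := by
  have h := HasDerivAt.of_local_left_inverse
    ((am_continuous hm0 hm1).continuousAt)
    (amF_hasDerivAt hm0 hm1 (am m u))
    (jF_pos hm0 hm1 (am m u)).ne'
    (Eventually.of_forall (amF_am hm0 hm1))
  have : (jF m (am m u))⁻¹ = dn u m := by
    rw [jF, dn, one_div, inv_inv, sn]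
  rwa [this] at h

lemma am_zero (hm0 : 0 ≤ m) (hm1 : m < 1) : am m 0 = 0 := by
  have h := am_amF hm0 hm1 0
  rwa [amF_zero] at h

/-! ### Basic properties of sn, cn, dn -/

lemma dn_base_pos (hm0 : 0 ≤ m) (hm1 : m < 1) (u : ℝ) : 0 < 1 - m * sn u m ^ 2 :=
  base_pos hm0 hm1 (am m u)

lemma dn_pos (hm0 : 0 ≤ m) (hm1 : m < 1) (u : ℝ) : 0 < dn u m :=
  Real.sqrt_pos.mpr (dn_base_pos hm0 hm1 u)

lemma dn_sq (hm0 : 0 ≤ m) (hm1 : m < 1) (u : ℝ) : dn u m ^ 2 = 1 - m * sn u m ^ 2 :=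
  Real.sq_sqrt (dn_base_pos hm0 hm1 u).le

lemma cn_sq (u : ℝ) : cn u m ^ 2 = 1 - sn u m ^ 2 := by
  have := Real.sin_sq_add_cos_sq (am m u)
  rw [sn, cn]; linarith

lemma sn_sq_le_one (u : ℝ) : sn u m ^ 2 ≤ 1 := by
  rw [sn]; exact Real.sin_sq_le_one _

lemma sn_zero (hm0 : 0 ≤ m) (hm1 : m < 1) : sn 0 m = 0 := by
  rw [sn, am_zero hm0 hm1, Real.sin_zero]

lemma cn_zero (hm0 : 0 ≤ m) (hm1 : m < 1) : cn 0 m = 1 := by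
  rw [cn, am_zero hm0 hm1, Real.cos_zero]

lemma dn_zero (hm0 : 0 ≤ m) (hm1 : m < 1) : dn 0 m = 1 := by
  rw [dn, sn_zero hm0 hm1]
  simp

lemma am_neg (hm0 : 0 ≤ m) (hm1 : m < 1) (u : ℝ) : am m (-u) = -(am m u) := by
  apply (amF_strictMono hm0 hm1).injective
  rw [amF_am hm0 hm1, amF_neg, amF_am hm0 hm1]

lemma sn_neg (hm0 : 0 ≤ m) (hm1 : m < 1) (u : ℝ) : sn (-u) m = -sn u m := by
  rw [sn, sn, am_neg hm0 hm1, Real.sin_neg]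

lemma cn_neg (hm0 : 0 ≤ m) (hm1 : m < 1) (u : ℝ) : cn (-u) m = cn u m := by
  rw [cn, cn, am_neg hm0 hm1, Real.cos_neg]

lemma dn_neg (hm0 : 0 ≤ m) (hm1 : m < 1) (u : ℝ) : dn (-u) m = dn u m := by
  rw [dn, dn, sn_neg hm0 hm1]; ring_nf

/-! ### Derivatives -/

lemma hasDerivAt_sn (hm0 : 0 ≤ m) (hm1 : m < 1) (u : ℝ) :
    HasDerivAt (fun u => sn u m) (cn u m * dn u m) u := by
  have h := (Real.hasDerivAt_sin (am m u)).comp u (am_hasDerivAt hm0 hm1 u)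
  simpa [sn, cn, Function.comp_def] using h

lemma hasDerivAt_cn (hm0 : 0 ≤ m) (hm1 : m < 1) (u : ℝ) :
    HasDerivAt (fun u => cn u m) (-(sn u m * dn u m)) u := by
  have h := (Real.hasDerivAt_cos (am m u)).comp u (am_hasDerivAt hm0 hm1 u)
  simpa [sn, cn, neg_mul, Function.comp_def] using h

lemma hasDerivAt_dn (hm0 : 0 ≤ m) (hm1 : m < 1) (u : ℝ) :
    HasDerivAt (fun u => dn u m) (-(m * sn u m * cn u m)) u := by
  have hin : HasDerivAt (fun u => 1 - m * sn u m ^ 2)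
      (-(m * (2 * sn u m ^ 1 * (cn u m * dn u m)))) u :=
    (((hasDerivAt_sn hm0 hm1 u).pow 2).const_mul m).const_sub 1
  have h := (Real.hasDerivAt_sqrt (dn_base_pos hm0 hm1 u).ne').comp u hin
  have hdn : Real.sqrt (1 - m * sn u m ^ 2) = dn u m := rfl
  refine h.congr_deriv (Eq.symm ?_)
  rw [hdn]
  have := (dn_pos hm0 hm1 u).ne'
  field_simp

/-! ### Special values at K -/

lemma ellK_eq : ellK m = amF m (π/2) := rfl

lemma am_ellK (hm0 : 0 ≤ m) (hm1 : m < 1) : am m (ellK m) = π/2 := by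
  rw [ellK_eq, am_amF hm0 hm1]

lemma sn_ellK (hm0 : 0 ≤ m) (hm1 : m < 1) : sn (ellK m) m = 1 := by
  rw [sn, am_ellK hm0 hm1, Real.sin_pi_div_two]

lemma cn_ellK (hm0 : 0 ≤ m) (hm1 : m < 1) : cn (ellK m) m = 0 := by
  rw [cn, am_ellK hm0 hm1, Real.cos_pi_div_two]

lemma dn_ellK (hm0 : 0 ≤ m) (hm1 : m < 1) : dn (ellK m) m = Real.sqrt (1 - m) := by
  rw [dn, sn_ellK hm0 hm1]; norm_num

/-! ### Addition theorems -/

lemma add_den_pos (hm0 : 0 ≤ m) (hm1 : m < 1) (u v : ℝ) :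
    0 < 1 - m * sn u m ^ 2 * sn v m ^ 2 := by
  have h1 : m * sn u m ^ 2 ≤ m * 1 := mul_le_mul_of_nonneg_left (sn_sq_le_one u) hm0
  have h0 : 0 ≤ m * sn u m ^ 2 := mul_nonneg hm0 (sq_nonneg _)
  have h2 : m * sn u m ^ 2 * sn v m ^ 2 ≤ m * sn u m ^ 2 * 1 :=
    mul_le_mul_of_nonneg_left (sn_sq_le_one v) h0
  nlinarith

private lemma aux_derivs (hm0 : 0 ≤ m) (hm1 : m < 1) (s t : ℝ) :
    HasDerivAt (fun t => sn (s - t) m) (cn (s - t) m * dn (s - t) m * (-1)) t ∧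
    HasDerivAt (fun t => cn (s - t) m) (-(sn (s - t) m * dn (s - t) m) * (-1)) t ∧
    HasDerivAt (fun t => dn (s - t) m) (-(m * sn (s - t) m * cn (s - t) m) * (-1)) t := by
  have hlin : HasDerivAt (fun t : ℝ => s - t) (-1) t := by
    simpa using (hasDerivAt_id t).const_sub s
  exact ⟨(hasDerivAt_sn hm0 hm1 (s - t)).comp t hlin,
    (hasDerivAt_cn hm0 hm1 (s - t)).comp t hlin,
    (hasDerivAt_dn hm0 hm1 (s - t)).comp t hlin⟩

lemma sn_add_aux (hm0 : 0 ≤ m) (hm1 : m < 1) (s t : ℝ) :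
    HasDerivAt (fun t => (sn t m * cn (s - t) m * dn (s - t) m
        + sn (s - t) m * cn t m * dn t m)
      / (1 - m * sn t m ^ 2 * sn (s - t) m ^ 2)) 0 t := by
  obtain ⟨hs2, hc2, hd2⟩ := aux_derivs hm0 hm1 s t
  have hs1 := hasDerivAt_sn hm0 hm1 t
  have hc1 := hasDerivAt_cn hm0 hm1 t
  have hd1 := hasDerivAt_dn hm0 hm1 t
  have hnum := ((hs1.mul hc2).mul hd2).add ((hs2.mul hc1).mul hd1)
  have hden := (((hs1.pow 2).const_mul m).mul (hs2.pow 2)).const_sub 1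
  have hne : 1 - m * sn t m ^ 2 * sn (s - t) m ^ 2 ≠ 0 :=
    (add_den_pos hm0 hm1 t (s - t)).ne'
  have h := hnum.div hden hne
  refine h.congr_deriv (Eq.symm ?_)
  dsimp only [Pi.mul_apply, Pi.add_apply, Pi.sub_apply, Pi.pow_apply]
  rw [eq_comm, div_eq_zero_iff]
  left
  have hcn1 := cn_sq (m := m) t
  have hdn1 := dn_sq hm0 hm1 t
  have hcn2 := cn_sq (m := m) (s - t)
  have hdn2 := dn_sq hm0 hm1 (s - t)
  set s1 := sn t m; set c1 := cn t m; set d1 := dn t m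
  set s2 := sn (s - t) m; set c2 := cn (s - t) m; set d2 := dn (s - t) m
  linear_combination
    ((-1)*m*s1*s2 + 2*m*s1*d1^2*s2^3 + m^2*s1^3*s2^3) * hcn1
    + ((-1)*s1*s2 + 2*m*s1*s2^3 + (-1)*m*s1^3*s2^3) * hdn1
    + (m*s1*s2 + (-2)*m*s1^3*s2*d2^2 + (-1)*m^2*s1^3*s2^3) * hcn2
    + (s1*s2 + (-2)*m*s1^3*s2 + m*s1^3*s2^3) * hdn2

lemma cn_add_aux (hm0 : 0 ≤ m) (hm1 : m < 1) (s t : ℝ) :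
    HasDerivAt (fun t => (cn t m * cn (s - t) m
        - sn t m * sn (s - t) m * dn t m * dn (s - t) m)
      / (1 - m * sn t m ^ 2 * sn (s - t) m ^ 2)) 0 t := by
  obtain ⟨hs2, hc2, hd2⟩ := aux_derivs hm0 hm1 s t
  have hs1 := hasDerivAt_sn hm0 hm1 t
  have hc1 := hasDerivAt_cn hm0 hm1 t
  have hd1 := hasDerivAt_dn hm0 hm1 t
  have hnum := (hc1.mul hc2).sub (((hs1.mul hs2).mul hd1).mul hd2)
  have hden := (((hs1.pow 2).const_mul m).mul (hs2.pow 2)).const_sub 1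
  have hne : 1 - m * sn t m ^ 2 * sn (s - t) m ^ 2 ≠ 0 :=
    (add_den_pos hm0 hm1 t (s - t)).ne'
  have h := hnum.div hden hne
  refine h.congr_deriv (Eq.symm ?_)
  dsimp only [Pi.mul_apply, Pi.add_apply, Pi.sub_apply, Pi.pow_apply]
  rw [eq_comm, div_eq_zero_iff]
  left
  have hcn1 := cn_sq (m := m) t
  have hdn1 := dn_sq hm0 hm1 t
  have hcn2 := cn_sq (m := m) (s - t)
  have hdn2 := dn_sq hm0 hm1 (s - t)
  set s1 := sn t m; set c1 := cn t m; set d1 := dn t m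
  set s2 := sn (s - t) m; set c2 := cn (s - t) m; set d2 := dn (s - t) m
  linear_combination
    (2*m*s1*d1*s2^2*c2) * hcn1
    + ((-1)*c1*s2*d2 + (-1)*m*s1^2*c1*s2^3*d2) * hdn1
    + ((-2)*m*s1^2*c1*s2*d2) * hcn2
    + (s1*d1*c2 + m*s1^3*d1*s2^2*c2) * hdn2

lemma dn_add_aux (hm0 : 0 ≤ m) (hm1 : m < 1) (s t : ℝ) :
    HasDerivAt (fun t => (dn t m * dn (s - t) m
        - m * sn t m * sn (s - t) m * cn t m * cn (s - t) m)
      / (1 - m * sn t m ^ 2 * sn (s - t) m ^ 2)) 0 t := by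
  obtain ⟨hs2, hc2, hd2⟩ := aux_derivs hm0 hm1 s t
  have hs1 := hasDerivAt_sn hm0 hm1 t
  have hc1 := hasDerivAt_cn hm0 hm1 t
  have hd1 := hasDerivAt_dn hm0 hm1 t
  have hnum := (hd1.mul hd2).sub ((((hs1.const_mul m).mul hs2).mul hc1).mul hc2)
  have hden := (((hs1.pow 2).const_mul m).mul (hs2.pow 2)).const_sub 1
  have hne : 1 - m * sn t m ^ 2 * sn (s - t) m ^ 2 ≠ 0 :=
    (add_den_pos hm0 hm1 t (s - t)).ne'
  have h := hnum.div hden hne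
  refine h.congr_deriv (Eq.symm ?_)
  dsimp only [Pi.mul_apply, Pi.add_apply, Pi.sub_apply, Pi.pow_apply]
  rw [eq_comm, div_eq_zero_iff]
  left
  have hcn1 := cn_sq (m := m) t
  have hdn1 := dn_sq hm0 hm1 t
  have hcn2 := cn_sq (m := m) (s - t)
  have hdn2 := dn_sq hm0 hm1 (s - t)
  set s1 := sn t m; set c1 := cn t m; set d1 := dn t m
  set s2 := sn (s - t) m; set c2 := cn (s - t) m; set d2 := dn (s - t) m
  linear_combination
    ((-1)*m*d1*s2*c2 + (-1)*m^2*s1^2*d1*s2^3*c2) * hcn1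
    + (2*m*s1*c1*s2^2*d2) * hdn1
    + (m*s1*c1*d2 + m^2*s1^3*c1*s2^2*d2) * hcn2
    + ((-2)*m*s1^2*d1*s2*c2) * hdn2


lemma sn_add (hm0 : 0 ≤ m) (hm1 : m < 1) (u v : ℝ) :
    sn (u + v) m * (1 - m * sn u m ^ 2 * sn v m ^ 2)
      = sn u m * cn v m * dn v m + sn v m * cn u m * dn u m := by
  have hconst := is_const_of_deriv_eq_zero
    (f := fun t => (sn t m * cn (u + v - t) m * dn (u + v - t) m
        + sn (u + v - t) m * cn t m * dn t m)
      / (1 - m * sn t m ^ 2 * sn (u + v - t) m ^ 2))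
    (fun t => (sn_add_aux hm0 hm1 (u + v) t).differentiableAt)
    (fun t => (sn_add_aux hm0 hm1 (u + v) t).deriv) u 0
  simp only [show u + v - u = v from by ring, sub_zero] at hconst
  rw [sn_zero hm0 hm1, cn_zero hm0 hm1, dn_zero hm0 hm1] at hconst
  norm_num at hconst
  rw [div_eq_iff (add_den_pos hm0 hm1 u v).ne'] at hconst
  linear_combination -hconst

lemma cn_add (hm0 : 0 ≤ m) (hm1 : m < 1) (u v : ℝ) :
    cn (u + v) m * (1 - m * sn u m ^ 2 * sn v m ^ 2)
      = cn u m * cn v m - sn u m * sn v m * dn u m * dn v m := by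
  have hconst := is_const_of_deriv_eq_zero
    (f := fun t => (cn t m * cn (u + v - t) m
        - sn t m * sn (u + v - t) m * dn t m * dn (u + v - t) m)
      / (1 - m * sn t m ^ 2 * sn (u + v - t) m ^ 2))
    (fun t => (cn_add_aux hm0 hm1 (u + v) t).differentiableAt)
    (fun t => (cn_add_aux hm0 hm1 (u + v) t).deriv) u 0
  simp only [show u + v - u = v from by ring, sub_zero] at hconst
  rw [sn_zero hm0 hm1, cn_zero hm0 hm1, dn_zero hm0 hm1] at hconst
  norm_num at hconst
  rw [div_eq_iff (add_den_pos hm0 hm1 u v).ne'] at hconst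
  linear_combination -hconst

lemma dn_add (hm0 : 0 ≤ m) (hm1 : m < 1) (u v : ℝ) :
    dn (u + v) m * (1 - m * sn u m ^ 2 * sn v m ^ 2)
      = dn u m * dn v m - m * sn u m * sn v m * cn u m * cn v m := by
  have hconst := is_const_of_deriv_eq_zero
    (f := fun t => (dn t m * dn (u + v - t) m
        - m * sn t m * sn (u + v - t) m * cn t m * cn (u + v - t) m)
      / (1 - m * sn t m ^ 2 * sn (u + v - t) m ^ 2))
    (fun t => (dn_add_aux hm0 hm1 (u + v) t).differentiableAt)
    (fun t => (dn_add_aux hm0 hm1 (u + v) t).deriv) u 0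
  simp only [show u + v - u = v from by ring, sub_zero] at hconst
  rw [sn_zero hm0 hm1, cn_zero hm0 hm1, dn_zero hm0 hm1] at hconst
  norm_num at hconst
  rw [div_eq_iff (add_den_pos hm0 hm1 u v).ne'] at hconst
  linear_combination -hconst

/-! ### Shifts by K -/

lemma cn_add_ellK_mul (hm0 : 0 ≤ m) (hm1 : m < 1) (b : ℝ) :
    cn (b + ellK m) m * dn b m = -(Real.sqrt (1 - m) * sn b m) := by
  have h := cn_add hm0 hm1 b (ellK m)
  rw [sn_ellK hm0 hm1, cn_ellK hm0 hm1, dn_ellK hm0 hm1] at h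
  have hd2 := dn_sq hm0 hm1 b
  have hdne := (dn_pos hm0 hm1 b).ne'
  have hX : (cn (b + ellK m) m * dn b m + Real.sqrt (1 - m) * sn b m) * dn b m = 0 := by
    linear_combination h + cn (b + ellK m) m * hd2
  have h0 := (mul_eq_zero.mp hX).resolve_right hdne
  linarith

lemma cn_sub_ellK_mul (hm0 : 0 ≤ m) (hm1 : m < 1) (b : ℝ) :
    cn (b - ellK m) m * dn b m = Real.sqrt (1 - m) * sn b m := by
  have h := cn_add hm0 hm1 b (-(ellK m))
  rw [← sub_eq_add_neg, sn_neg hm0 hm1, cn_neg hm0 hm1, dn_neg hm0 hm1,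
    sn_ellK hm0 hm1, cn_ellK hm0 hm1, dn_ellK hm0 hm1] at h
  have hd2 := dn_sq hm0 hm1 b
  have hdne := (dn_pos hm0 hm1 b).ne'
  have hX : (cn (b - ellK m) m * dn b m - Real.sqrt (1 - m) * sn b m) * dn b m = 0 := by
    linear_combination h + cn (b - ellK m) m * hd2
  have h0 := (mul_eq_zero.mp hX).resolve_right hdne
  linarith

lemma dn_sub_ellK_mul (hm0 : 0 ≤ m) (hm1 : m < 1) (b : ℝ) :
    dn (b - ellK m) m * dn b m = Real.sqrt (1 - m) := by
  have h := dn_add hm0 hm1 b (-(ellK m))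
  rw [← sub_eq_add_neg, sn_neg hm0 hm1, cn_neg hm0 hm1, dn_neg hm0 hm1,
    sn_ellK hm0 hm1, cn_ellK hm0 hm1, dn_ellK hm0 hm1] at h
  have hd2 := dn_sq hm0 hm1 b
  have hdne := (dn_pos hm0 hm1 b).ne'
  have hX : (dn (b - ellK m) m * dn b m - Real.sqrt (1 - m)) * dn b m = 0 := by
    linear_combination h + dn (b - ellK m) m * hd2
  have h0 := (mul_eq_zero.mp hX).resolve_right hdne
  linarith

/-- The subtraction-form identity `cn(a-b) cn b - sn(a-b) sn b dn a - cn a = 0`. -/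
lemma key_identity (hm0 : 0 ≤ m) (hm1 : m < 1) (a b : ℝ) :
    cn (a - b) m * cn b m - sn (a - b) m * sn b m * dn a m - cn a m = 0 := by
  have hC := cn_add hm0 hm1 (a - b) b
  have hD := dn_add hm0 hm1 (a - b) b
  rw [sub_add_cancel] at hC hD
  have hN := (add_den_pos hm0 hm1 (a - b) b).ne'
  have hW : (cn (a - b) m * cn b m - sn (a - b) m * sn b m * dn a m - cn a m)
      * (1 - m * sn (a - b) m ^ 2 * sn b m ^ 2) = 0 := by
    linear_combination (-(sn (a - b) m * sn b m)) * hD + (-1) * hC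
  rcases mul_eq_zero.mp hW with h | h
  · exact h
  · exact absurd h hN

/-- The key identity behind the kernel property of the functions `f` for the Kasteleyn
operator on the bipartite graph `G^Q`: with `θ = (β-α)/2`, `a = (u-α)/2`, `b = (u-β)/2`
and `K = K(k)`, `k' = √(1-k²)`,
`sn θ (dn a/cn a)(dn b/cn b) + k' cn θ (1/cn(b+K))(1/cn a)
  + (dn b/cn b)(dn(b-K)/cn(b-K)) = 0`. -/

theorem GQ_kernel_identity (k : ℝ) (hk : k ^ 2 < 1) (u α β : ℝ)
    (ha : cn ((u - α) / 2) (k ^ 2) ≠ 0)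
    (hb : cn ((u - β) / 2) (k ^ 2) ≠ 0)
    (hbp : cn ((u - β) / 2 + ellK (k ^ 2)) (k ^ 2) ≠ 0)
    (hbm : cn ((u - β) / 2 - ellK (k ^ 2)) (k ^ 2) ≠ 0) :
    sn ((β - α) / 2) (k ^ 2) *
        (dn ((u - α) / 2) (k ^ 2) / cn ((u - α) / 2) (k ^ 2)) *
        (dn ((u - β) / 2) (k ^ 2) / cn ((u - β) / 2) (k ^ 2))
      + Real.sqrt (1 - k ^ 2) * cn ((β - α) / 2) (k ^ 2) *
          (1 / cn ((u - β) / 2 + ellK (k ^ 2)) (k ^ 2)) *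
          (1 / cn ((u - α) / 2) (k ^ 2))
      + (dn ((u - β) / 2) (k ^ 2) / cn ((u - β) / 2) (k ^ 2)) *
          (dn ((u - β) / 2 - ellK (k ^ 2)) (k ^ 2) /
            cn ((u - β) / 2 - ellK (k ^ 2)) (k ^ 2)) = 0 := by
  have hm0 : (0:ℝ) ≤ k ^ 2 := sq_nonneg k
  have hm1 : k ^ 2 < 1 := hk
  have hdb := dn_pos hm0 hm1 ((u - β) / 2)
  have hda := dn_pos hm0 hm1 ((u - α) / 2)
  have hkp : (0:ℝ) < Real.sqrt (1 - k ^ 2) := Real.sqrt_pos.mpr (by linarith)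
  have hcp := cn_add_ellK_mul hm0 hm1 ((u - β) / 2)
  have hcm := cn_sub_ellK_mul hm0 hm1 ((u - β) / 2)
  have hdm := dn_sub_ellK_mul hm0 hm1 ((u - β) / 2)
  have hsb : sn ((u - β) / 2) (k ^ 2) ≠ 0 := by
    intro h0
    rw [h0, mul_zero, neg_zero] at hcp
    exact hbp ((mul_eq_zero.mp hcp).resolve_right hdb.ne')
  have hkey := key_identity hm0 hm1 ((u - α) / 2) ((u - β) / 2)
  rw [show (u - α) / 2 - (u - β) / 2 = (β - α) / 2 from by ring] at hkey
  have e3 : dn ((u - β) / 2 - ellK (k ^ 2)) (k ^ 2) /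
        cn ((u - β) / 2 - ellK (k ^ 2)) (k ^ 2)
      = 1 / sn ((u - β) / 2) (k ^ 2) := by
    rw [div_eq_div_iff hbm hsb]
    have hX : (dn ((u - β) / 2 - ellK (k ^ 2)) (k ^ 2) * sn ((u - β) / 2) (k ^ 2)
        - cn ((u - β) / 2 - ellK (k ^ 2)) (k ^ 2)) * dn ((u - β) / 2) (k ^ 2) = 0 := by
      linear_combination sn ((u - β) / 2) (k ^ 2) * hdm - hcm
    have h0 := (mul_eq_zero.mp hX).resolve_right hdb.ne'
    linarith
  have e2 : (1:ℝ) / cn ((u - β) / 2 + ellK (k ^ 2)) (k ^ 2)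
      = -(dn ((u - β) / 2) (k ^ 2)) / (Real.sqrt (1 - k ^ 2) * sn ((u - β) / 2) (k ^ 2)) := by
    rw [div_eq_div_iff hbp (mul_ne_zero hkp.ne' hsb)]
    linear_combination hcp
  rw [e2, e3]
  field_simp
  linear_combination (-
    dn ((u - β) / 2) (k ^ 2)) * hkey
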